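/- arXiv:2105.12150 — 2 statements merged into one kernel-verified Lean document; each statement's English description precedes it below -/
import Mathlib

section
/- In a median graph G, for every Θ-class E_i: the graph G deprived of the edges of E_i has exactly two connected components H_i' and H_i''; the edges of E_i form a matching (no two edges of E_i share an endpoint); both H_i' and H_i'' are convex; and if uv is an edge of E_i with u ∈ H_i' and v ∈ H_i'', then H_i' = {x ∈ V : d(x,u) < d(x,v)} and H_i'' = {x ∈ V : d(x,v) < d(x,u)}. -/
namespace MedianPaper

variable {V : Type*}

/-- The metric interval `I(u,v)`: vertices on shortest `(u,v)`-paths. -/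
def interval (G : SimpleGraph V) (u v : V) : Set V :=
  {w | G.dist u w + G.dist w v = G.dist u v}

/-- A median graph: a connected graph in which every triple of vertices
has a unique median. -/
def MedianGraph (G : SimpleGraph V) : Prop :=
  G.Connected ∧ ∀ x y z : V, ∃! m : V,
    m ∈ interval G x y ∧ m ∈ interval G y z ∧ m ∈ interval G z x

/-- `u v x y` span a 4-cycle `u-v-y-x-u`, with opposite edge pairs
`(uv, xy)` and `(ux, vy)`. -/
def IsSquare (G : SimpleGraph V) (u v x y : V) : Prop :=
  G.Adj u v ∧ G.Adj x y ∧ G.Adj u x ∧ G.Adj v y ∧ u ≠ y ∧ v ≠ x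

/-- Two edges are in relation Θ₀ if they are opposite edges of a common 4-cycle. -/
def Theta0 (G : SimpleGraph V) (e f : Sym2 V) : Prop :=
  ∃ u v x y : V, IsSquare G u v x y ∧ e = s(u, v) ∧ f = s(x, y)

/-- Θ : the reflexive-transitive closure of Θ₀ on the edges of `G`. -/
def Theta (G : SimpleGraph V) (e f : Sym2 V) : Prop :=
  e ∈ G.edgeSet ∧ f ∈ G.edgeSet ∧ Relation.ReflTransGen (Theta0 G) e f

/-- The Θ-classes of `G`: equivalence classes of edges under Θ. -/
def ThetaClass (G : SimpleGraph V) (C : Set (Sym2 V)) : Prop :=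
  ∃ e ∈ G.edgeSet, C = {f | Theta G e f}

/-- The edge set `C` separates `u` from `v` : they lie in different
components of `G` minus `C`. -/
def Separates (G : SimpleGraph V) (C : Set (Sym2 V)) (u v : V) : Prop :=
  ¬ (G.deleteEdges C).Reachable u v

/-- The signature `σ_{u,v}`: Θ-classes separating `u` from `v`. -/
def signature (G : SimpleGraph V) (u v : V) : Set (Set (Sym2 V)) :=
  {C | ThetaClass G C ∧ Separates G C u v}

/-- `H`, `H'` are the two connected components (halfspaces) of `G` deprived
of the edges in `C`. -/
def IsHalfspacePair (G : SimpleGraph V) (C : Set (Sym2 V)) (H H' : Set V) : Prop :=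
  H.Nonempty ∧ H'.Nonempty ∧ Disjoint H H' ∧ H ∪ H' = Set.univ ∧
  (∀ x ∈ H, ∀ y ∈ H, (G.deleteEdges C).Reachable x y) ∧
  (∀ x ∈ H', ∀ y ∈ H', (G.deleteEdges C).Reachable x y) ∧
  (∀ x ∈ H, ∀ y ∈ H', ¬ (G.deleteEdges C).Reachable x y)

/-- The boundary of a halfspace `H` of the Θ-class `C` : vertices of `H`
incident to an edge of `C`. -/
def boundarySet (G : SimpleGraph V) (C : Set (Sym2 V)) (H : Set V) : Set V :=
  {x | x ∈ H ∧ ∃ y, G.Adj x y ∧ s(x, y) ∈ C}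

/-- Orthogonality of Θ-classes: there is a common square using both. -/
def Orthogonal (G : SimpleGraph V) (C₁ C₂ : Set (Sym2 V)) : Prop :=
  ∃ u v x y : V, IsSquare G u v x y ∧
    s(u, v) ∈ C₁ ∧ s(x, y) ∈ C₁ ∧ s(u, x) ∈ C₂ ∧ s(v, y) ∈ C₂

/-- A pairwise orthogonal family (POF) of Θ-classes. -/
def IsPOF (G : SimpleGraph V) (X : Set (Set (Sym2 V))) : Prop :=
  (∀ C ∈ X, ThetaClass G C) ∧
  ∀ C ∈ X, ∀ C' ∈ X, C ≠ C' → Orthogonal G C C'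

/-- The `k`-dimensional hypercube graph, on subsets of `{1,…,k}`;
two subsets are adjacent iff their symmetric difference has one element. -/
def cubeGraph (k : ℕ) : SimpleGraph (Finset (Fin k)) where
  Adj A B := (symmDiff A B).card = 1
  symm := by
    constructor
    intro A B h
    rwa [symmDiff_comm] at h
  loopless := by
    constructor
    intro A h
    simp [symmDiff_self] at h

/-- `S` induces a hypercube of dimension `k` in `G`. -/
def IsCubeDim (G : SimpleGraph V) (S : Set V) (k : ℕ) : Prop :=
  Nonempty ((G.induce S) ≃g cubeGraph k)

/-- `S` induces a hypercube in `G`. -/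
def IsInducedCube (G : SimpleGraph V) (S : Set V) : Prop :=
  ∃ k, IsCubeDim G S k

/-- The dimension of `G` is `d`: the largest dimension of an induced hypercube. -/
def GraphDim (G : SimpleGraph V) (d : ℕ) : Prop :=
  (∃ S : Set V, IsCubeDim G S d) ∧ ∀ (S : Set V) (k : ℕ), IsCubeDim G S k → k ≤ d

/-- The Θ-classes of the edges of the induced subgraph on `S`. -/
def cubeClasses (G : SimpleGraph V) (S : Set V) : Set (Set (Sym2 V)) :=
  {C | ThetaClass G C ∧ ∃ x ∈ S, ∃ y ∈ S, G.Adj x y ∧ s(x, y) ∈ C}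

/-- With the `v₀`-orientation, `b ∈ S` is the basis of `S`: all edges of `S`
incident to `b` are outgoing from `b`. -/
def IsBasis (G : SimpleGraph V) (v₀ : V) (S : Set V) (b : V) : Prop :=
  b ∈ S ∧ ∀ w ∈ S, G.Adj b w → G.dist v₀ b < G.dist v₀ w

/-- With the `v₀`-orientation, `b ∈ S` is the anti-basis of `S`: all edges of `S`
incident to `b` are ingoing to `b`. -/
def IsAntiBasis (G : SimpleGraph V) (v₀ : V) (S : Set V) (b : V) : Prop :=
  b ∈ S ∧ ∀ w ∈ S, G.Adj b w → G.dist v₀ w < G.dist v₀ b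

/-- `ℰ⁻(v)` : the Θ-classes containing at least one edge ingoing to `v`. -/
def inClasses (G : SimpleGraph V) (v₀ v : V) : Set (Set (Sym2 V)) :=
  {C | ThetaClass G C ∧ ∃ u, G.Adj u v ∧ G.dist v₀ u < G.dist v₀ v ∧ s(u, v) ∈ C}

/-- The ladder set `L_{u,v}`: classes of the signature `σ_{u,v}` having an
edge incident to `u`. -/
def ladder (G : SimpleGraph V) (u v : V) : Set (Set (Sym2 V)) :=
  {C | C ∈ signature G u v ∧ ∃ w, G.Adj u w ∧ s(u, w) ∈ C}

/-- A POF each of whose classes has an edge outgoing from `u`. -/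
def OutgoingPOF (G : SimpleGraph V) (v₀ u : V) (L : Set (Set (Sym2 V))) : Prop :=
  IsPOF G L ∧ ∀ C ∈ L, ∃ w, G.Adj u w ∧ G.dist v₀ u < G.dist v₀ w ∧ s(u, w) ∈ C

/-- A POF each of whose classes has an edge ingoing to `u`. -/
def IngoingPOF (G : SimpleGraph V) (v₀ u : V) (X : Set (Set (Sym2 V))) : Prop :=
  IsPOF G X ∧ ∀ C ∈ X, ∃ w, G.Adj w u ∧ G.dist v₀ w < G.dist v₀ u ∧ s(w, u) ∈ C

/-- `m` is a median of the triple `x, y, z`. -/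
def IsMedian (G : SimpleGraph V) (x y z m : V) : Prop :=
  m ∈ interval G x y ∧ m ∈ interval G y z ∧ m ∈ interval G z x

/-- `b` is the milestone following `a` on the way to `v`: `b` is the anti-basis of
the induced hypercube with basis `a` whose Θ-classes are the ladder set `L_{a,v}`. -/
def NextMilestone (G : SimpleGraph V) (v₀ v a b : V) : Prop :=
  ∃ S : Set V, IsInducedCube G S ∧ IsBasis G v₀ S a ∧ IsAntiBasis G v₀ S b ∧
    cubeClasses G S = ladder G a v

/-- The milestone set `Π(u,v)`: vertices obtained from `u` by iterating the
next-milestone step towards `v`. -/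
def MilestoneSet (G : SimpleGraph V) (v₀ u v : V) : Set V :=
  {p | Relation.ReflTransGen (fun a b => NextMilestone G v₀ v a b) u p}

/-- The penultimate milestone `π̄(u,v)`: the milestone of `Π(u,v)` other than `v`
closest to `v`, i.e. whose next milestone is `v` itself. -/
def IsPenultimate (G : SimpleGraph V) (v₀ u v p : V) : Prop :=
  p ∈ MilestoneSet G v₀ u v ∧ p ≠ v ∧ NextMilestone G v₀ v p v

/-- A convex set of vertices. -/
def ConvexSet (G : SimpleGraph V) (H : Set V) : Prop :=
  ∀ u ∈ H, ∀ v ∈ H, interval G u v ⊆ H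

/-- A gated set of vertices: each vertex has a gate in `H`. -/
def GatedSet (G : SimpleGraph V) (H : Set V) : Prop :=
  ∀ x : V, ∃ g ∈ H, ∀ h ∈ H, g ∈ interval G x h


open SimpleGraph

section Aux

variable {G : SimpleGraph V} {u v w x y z a b : V}

/-- bipartite-type lemma -/
lemma dist_ne_of_adj (hmed : MedianGraph G) (z : V) (h : G.Adj p q) :
    G.dist z p ≠ G.dist z q := by
  obtain ⟨hconn, hm⟩ := hmed
  intro heq
  obtain ⟨m, ⟨h1, h2, h3⟩, -⟩ := hm p q z
  simp only [interval, Set.mem_setOf_eq] at h1 h2 h3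
  have hpq : G.dist p q = 1 := SimpleGraph.dist_eq_one_iff_adj.mpr h
  rw [hpq] at h1
  have h0 : G.dist p m = 0 ∨ G.dist m q = 0 := by omega
  have c1 : G.dist q z = G.dist z q := SimpleGraph.dist_comm
  have c2 : G.dist z p = G.dist p z := SimpleGraph.dist_comm
  rcases h0 with h0 | h0
  · have hep : p = m := (hconn.dist_eq_zero_iff).mp h0
    rw [← hep] at h2
    have c3 : G.dist q p = 1 := by rwa [SimpleGraph.dist_comm] at hpq
    omega
  · have heq2 : m = q := (hconn.dist_eq_zero_iff).mp h0
    rw [heq2] at h3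
    have c3 : G.dist q p = 1 := by rwa [SimpleGraph.dist_comm] at hpq
    omega

/-- adjacent vertices: distances to z differ by exactly one -/
lemma dist_adj_cases (hmed : MedianGraph G) (z : V) (h : G.Adj p q) :
    G.dist z q = G.dist z p + 1 ∨ G.dist z p = G.dist z q + 1 := by
  have hconn := hmed.1
  have h1 : G.dist z q ≤ G.dist z p + G.dist p q := hconn.dist_triangle
  have h2 : G.dist z p ≤ G.dist z q + G.dist q p := hconn.dist_triangle
  have h3 : G.dist p q = 1 := SimpleGraph.dist_eq_one_iff_adj.mpr h
  have h4 : G.dist q p = 1 := by rwa [SimpleGraph.dist_comm] at h3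
  have h5 := dist_ne_of_adj hmed z h
  omega

/-- first step of a geodesic -/
lemma first_step (hconn : G.Connected) (h : G.dist u v ≠ 0) :
    ∃ w, G.Adj u w ∧ G.dist w v + 1 = G.dist u v := by
  obtain ⟨p, hp⟩ := hconn.exists_walk_length_eq_dist u v
  cases p with
  | nil => simp at hp; have : G.dist u u = 0 := SimpleGraph.dist_self; omega
  | @cons _ w _ hadj q =>
      refine ⟨w, hadj, ?_⟩
      have h1 : G.dist w v ≤ q.length := SimpleGraph.dist_le q
      have h2 : G.dist u v ≤ G.dist u w + G.dist w v := hconn.dist_triangle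
      have h3 : G.dist u w ≤ 1 := by
        have := SimpleGraph.dist_eq_one_iff_adj.mpr hadj
        omega
      simp only [SimpleGraph.Walk.length_cons] at hp
      omega

/-- quadrangle condition -/
lemma quad (hmed : MedianGraph G) {c v s t : V} (hvs : G.Adj v s) (hvt : G.Adj v t)
    (hst : s ≠ t) (hs : G.dist c s + 1 = G.dist c v) (ht : G.dist c t + 1 = G.dist c v) :
    ∃ w, G.Adj s w ∧ G.Adj t w ∧ G.dist c w + 2 = G.dist c v := by
  obtain ⟨hconn, hm⟩ := id hmed
  have hst2 : G.dist s t = 2 := by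
    have hne : ¬ G.Adj s t := by
      intro hadj
      have := dist_ne_of_adj hmed v hadj
      have e1 : G.dist v s = 1 := SimpleGraph.dist_eq_one_iff_adj.mpr hvs
      have e2 : G.dist v t = 1 := SimpleGraph.dist_eq_one_iff_adj.mpr hvt
      omega
    have h1 : G.dist s t ≤ G.dist s v + G.dist v t := hconn.dist_triangle
    have e1 : G.dist s v = 1 := SimpleGraph.dist_eq_one_iff_adj.mpr hvs.symm
    have e2 : G.dist v t = 1 := SimpleGraph.dist_eq_one_iff_adj.mpr hvt
    have h0 : G.dist s t ≠ 0 := fun hh => hst (hconn.dist_eq_zero_iff.mp hh)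
    have h1' : G.dist s t ≠ 1 := fun hh => hne (SimpleGraph.dist_eq_one_iff_adj.mp hh)
    omega
  obtain ⟨m, ⟨h1, h2, h3⟩, -⟩ := hm s t c
  simp only [interval, Set.mem_setOf_eq] at h1 h2 h3
  rw [hst2] at h1
  -- h1 : dist s m + dist m t = 2, h2 : dist t m + dist m c = dist t c, h3 : dist c m + dist m s = dist c s
  have c1 : G.dist t m = G.dist m t := SimpleGraph.dist_comm
  have c2 : G.dist m s = G.dist s m := SimpleGraph.dist_comm
  have c3 : G.dist t c = G.dist c t := SimpleGraph.dist_comm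
  have hms : G.dist s m ≠ 0 := by
    intro h0
    have : s = m := hconn.dist_eq_zero_iff.mp h0
    rw [← this] at h2
    have d1 : G.dist t s = 2 := by rwa [SimpleGraph.dist_comm] at hst2
    have d2 : G.dist s c = G.dist c s := SimpleGraph.dist_comm
    omega
  have hmt : G.dist m t ≠ 0 := by
    intro h0
    have : m = t := hconn.dist_eq_zero_iff.mp h0
    rw [this] at h3
    have d1 : G.dist t s = 2 := by rwa [SimpleGraph.dist_comm] at hst2
    omega
  have e1 : G.dist s m = 1 := by omega
  have e2 : G.dist m t = 1 := by omega
  refine ⟨m, SimpleGraph.dist_eq_one_iff_adj.mp e1, ?_, by omega⟩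
  have : G.dist t m = 1 := by omega
  exact SimpleGraph.dist_eq_one_iff_adj.mp this

/-- in a median graph, squares have no chords and diagonal distance two -/
lemma square_diag (hmed : MedianGraph G) (hsq : IsSquare G u v x y) :
    G.dist u y = 2 ∧ G.dist v x = 2 := by
  obtain ⟨hconn, hm⟩ := id hmed
  obtain ⟨huv, hxy, hux, hvy, huy, hvx⟩ := hsq
  constructor
  · have hne : ¬ G.Adj u y := by
      intro hadj
      have := dist_ne_of_adj hmed v hadj
      have e1 : G.dist v u = 1 := SimpleGraph.dist_eq_one_iff_adj.mpr huv.symm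
      have e2 : G.dist v y = 1 := SimpleGraph.dist_eq_one_iff_adj.mpr hvy
      omega
    have h1 : G.dist u y ≤ G.dist u v + G.dist v y := hconn.dist_triangle
    have e1 : G.dist u v = 1 := SimpleGraph.dist_eq_one_iff_adj.mpr huv
    have e2 : G.dist v y = 1 := SimpleGraph.dist_eq_one_iff_adj.mpr hvy
    have h0 : G.dist u y ≠ 0 := fun hh => huy (hconn.dist_eq_zero_iff.mp hh)
    have h1' : G.dist u y ≠ 1 := fun hh => hne (SimpleGraph.dist_eq_one_iff_adj.mp hh)
    omega
  · have hne : ¬ G.Adj v x := by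
      intro hadj
      have := dist_ne_of_adj hmed u hadj
      have e1 : G.dist u v = 1 := SimpleGraph.dist_eq_one_iff_adj.mpr huv
      have e2 : G.dist u x = 1 := SimpleGraph.dist_eq_one_iff_adj.mpr hux
      omega
    have h1 : G.dist v x ≤ G.dist v u + G.dist u x := hconn.dist_triangle
    have e1 : G.dist v u = 1 := SimpleGraph.dist_eq_one_iff_adj.mpr huv.symm
    have e2 : G.dist u x = 1 := SimpleGraph.dist_eq_one_iff_adj.mpr hux
    have h0 : G.dist v x ≠ 0 := fun hh => hvx (hconn.dist_eq_zero_iff.mp hh)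
    have h1' : G.dist v x ≠ 1 := fun hh => hne (SimpleGraph.dist_eq_one_iff_adj.mp hh)
    omega

/-- key square lemma: opposite edges of a square induce the same sidedness -/
lemma square_sided_aux (hmed : MedianGraph G) (hsq : IsSquare G u v x y) (z : V)
    (h : G.dist z u < G.dist z v) : G.dist z x < G.dist z y := by
  obtain ⟨hconn, hm⟩ := id hmed
  obtain ⟨hd1, hd2⟩ := square_diag hmed hsq
  obtain ⟨huv, hxy, hux, hvy, huy, hvx⟩ := hsq
  have cuv := dist_adj_cases hmed z huv
  have cxy := dist_adj_cases hmed z hxy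
  have cux := dist_adj_cases hmed z hux
  have cvy := dist_adj_cases hmed z hvy
  by_contra hcon
  push_neg at hcon
  -- then dist z x = dist z y + 1
  have hzx : G.dist z x = G.dist z y + 1 := by omega
  have hzv : G.dist z v = G.dist z u + 1 := by omega
  -- case on dist z x vs dist z u
  rcases cux with hc | hc
  · -- dist z x = dist z u + 1, dist z y = dist z u
    -- u and y are both medians of (z, v, x)
    obtain ⟨m, -, hun⟩ := hm z v x
    have e1 : G.dist z u + G.dist u v = G.dist z v := by
      have : G.dist u v = 1 := SimpleGraph.dist_eq_one_iff_adj.mpr huv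
      omega
    have e2 : G.dist v u + G.dist u x = G.dist v x := by
      have a1 : G.dist v u = 1 := SimpleGraph.dist_eq_one_iff_adj.mpr huv.symm
      have a2 : G.dist u x = 1 := SimpleGraph.dist_eq_one_iff_adj.mpr hux
      omega
    have e3 : G.dist x u + G.dist u z = G.dist x z := by
      have a1 : G.dist x u = 1 := SimpleGraph.dist_eq_one_iff_adj.mpr hux.symm
      have a2 : G.dist u z = G.dist z u := SimpleGraph.dist_comm
      have a3 : G.dist x z = G.dist z x := SimpleGraph.dist_comm
      omega
    have hu : u = m := hun u ⟨e1, e2, e3⟩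
    have f1 : G.dist z y + G.dist y v = G.dist z v := by
      have : G.dist y v = 1 := SimpleGraph.dist_eq_one_iff_adj.mpr hvy.symm
      omega
    have f2 : G.dist v y + G.dist y x = G.dist v x := by
      have a1 : G.dist v y = 1 := SimpleGraph.dist_eq_one_iff_adj.mpr hvy
      have a2 : G.dist y x = 1 := SimpleGraph.dist_eq_one_iff_adj.mpr hxy.symm
      omega
    have f3 : G.dist x y + G.dist y z = G.dist x z := by
      have a1 : G.dist x y = 1 := SimpleGraph.dist_eq_one_iff_adj.mpr hxy
      have a2 : G.dist y z = G.dist z y := SimpleGraph.dist_comm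
      have a3 : G.dist x z = G.dist z x := SimpleGraph.dist_comm
      omega
    have hy : y = m := hun y ⟨f1, f2, f3⟩
    exact huy (hu.trans hy.symm)
  · -- dist z u = dist z x + 1; contradiction via v ~ y
    have h1 : G.dist z v ≤ G.dist z y + G.dist y v := hconn.dist_triangle
    have a1 : G.dist y v = 1 := SimpleGraph.dist_eq_one_iff_adj.mpr hvy.symm
    omega

lemma isSquare_swap (hsq : IsSquare G u v x y) : IsSquare G x y u v := by
  obtain ⟨huv, hxy, hux, hvy, huy, hvx⟩ := hsq
  exact ⟨hxy, huv, hux.symm, hvy.symm, hvx.symm, huy.symm⟩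

lemma square_sided (hmed : MedianGraph G) (hsq : IsSquare G u v x y) (z : V) :
    G.dist z u < G.dist z v ↔ G.dist z x < G.dist z y :=
  ⟨square_sided_aux hmed hsq z, square_sided_aux hmed (isSquare_swap hsq) z⟩

/-- every edge Θ-related to `ab` has a labelling with the same sidedness -/
lemma class_sided (hmed : MedianGraph G) (hab : G.Adj a b) {f : Sym2 V}
    (hf : Relation.ReflTransGen (Theta0 G) s(a, b) f) :
    ∃ p q : V, f = s(p, q) ∧ G.Adj p q ∧
      ∀ z, (G.dist z p < G.dist z q ↔ G.dist z a < G.dist z b) := by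
  induction hf with
  | refl => exact ⟨a, b, rfl, hab, fun z => Iff.rfl⟩
  | tail hrtg hstep ih =>
      obtain ⟨p, q, rfl, hpq, hiff⟩ := ih
      obtain ⟨u, v, x, y, hsq, he, hfe⟩ := hstep
      have hxy := hsq.2.1
      rcases Sym2.eq_iff.mp he with ⟨hu, hv⟩ | ⟨hu, hv⟩
      · subst hu; subst hv
        exact ⟨x, y, hfe, hxy, fun z =>
          ((square_sided hmed hsq z).symm).trans (hiff z)⟩
      · subst hu; subst hv
        refine ⟨y, x, by rw [hfe, Sym2.eq_swap], hxy.symm, fun z => ?_⟩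
        have h1 := square_sided hmed hsq z
        have h2 := hiff z
        have n1 := dist_ne_of_adj hmed z hxy
        have n2 := dist_ne_of_adj hmed z hpq
        constructor
        · intro h
          by_contra hc
          push_neg at hc
          have hnpq : ¬ (G.dist z p < G.dist z q) := fun hh => by
            have := h2.mp hh; omega
          have h3 : G.dist z q < G.dist z p := by omega
          have h4 := h1.mp h3
          omega
        · intro h
          have h3 := h2.mpr h
          have h4 : ¬ (G.dist z x < G.dist z y) := fun hh => by
            have := h1.mpr hh; omega
          omega

/-- every edge crossing the halfspace cut of `ab` is Θ-related to `ab` -/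
lemma crossing_in_class (hmed : MedianGraph G) (hab : G.Adj a b) :
    ∀ k u u', G.dist u a = k → G.dist u a < G.dist u b → G.dist u' b < G.dist u' a →
    G.Adj u u' → Relation.ReflTransGen (Theta0 G) s(a, b) s(u, u') := by
  have hconn := hmed.1
  intro k
  induction k using Nat.strong_induction_on with
  | _ k ih =>
    intro u u' hk hu hu' huu'
    have cu := dist_adj_cases hmed a huu'
    have cub := dist_adj_cases hmed b huu'
    -- normalize comm
    have m1 : G.dist a u = G.dist u a := SimpleGraph.dist_comm
    have m2 : G.dist a u' = G.dist u' a := SimpleGraph.dist_comm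
    have m3 : G.dist b u = G.dist u b := SimpleGraph.dist_comm
    have m4 : G.dist b u' = G.dist u' b := SimpleGraph.dist_comm
    have hub : G.dist u b = G.dist u a + 1 := by
      rcases dist_adj_cases hmed u hab with h | h
      · have c1 : G.dist u a = G.dist a u := SimpleGraph.dist_comm
        have c2 : G.dist u b = G.dist b u := SimpleGraph.dist_comm
        omega
      · have c1 : G.dist u a = G.dist a u := SimpleGraph.dist_comm
        have c2 : G.dist u b = G.dist b u := SimpleGraph.dist_comm
        omega
    have hu'a : G.dist u' a = G.dist u' b + 1 := by
      rcases dist_adj_cases hmed u' hab with h | h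
      · have c1 : G.dist u' a = G.dist a u' := SimpleGraph.dist_comm
        have c2 : G.dist u' b = G.dist b u' := SimpleGraph.dist_comm
        omega
      · have c1 : G.dist u' a = G.dist a u' := SimpleGraph.dist_comm
        have c2 : G.dist u' b = G.dist b u' := SimpleGraph.dist_comm
        omega
    rcases Nat.eq_zero_or_pos k with hk0 | hkpos
    · -- u = a, u' = b
      subst hk0
      have hua : u = a := hconn.dist_eq_zero_iff.mp (by omega)
      subst hua
      have : G.dist u' b = 0 := by
        have e1 : G.dist u u' = 1 := SimpleGraph.dist_eq_one_iff_adj.mpr huu'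
        have e2 : G.dist u' u = 1 := by rwa [SimpleGraph.dist_comm] at e1
        omega
      have hub' : u' = b := hconn.dist_eq_zero_iff.mp this
      subst hub'
      exact Relation.ReflTransGen.refl
    · -- main step
      have hu'd : G.dist u' a = k + 1 ∧ G.dist u' b = k := by
        constructor <;> omega
      obtain ⟨hu'a2, hu'b2⟩ := hu'd
      -- neighbor of u towards a
      obtain ⟨w, huw, hw⟩ := first_step hconn (u := u) (v := a) (by omega)
      have hwb : G.dist w b = k := by
        rcases dist_adj_cases hmed b huw with h | h
        · -- dist b w = dist b u + 1 = k + 2, but dist w b ≤ dist w a + 1 = k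
          have c1 : G.dist w b = G.dist b w := SimpleGraph.dist_comm
          have c2 : G.dist w b ≤ G.dist w a + G.dist a b := hconn.dist_triangle
          have c3 : G.dist a b = 1 := SimpleGraph.dist_eq_one_iff_adj.mpr hab
          omega
        · have c1 : G.dist w b = G.dist b w := SimpleGraph.dist_comm
          omega
      -- quadrangle at b with v := u, s := u', t := w
      have hq := quad hmed (c := b) huu' huw (by intro h; rw [h] at hu'a2; omega) (by omega) (by
        have c1 : G.dist b w = G.dist w b := SimpleGraph.dist_comm
        omega)
      obtain ⟨p, hu'p, hwp, hpb⟩ := hq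
      have hpb' : G.dist p b + 1 = k := by
        have c1 : G.dist b p = G.dist p b := SimpleGraph.dist_comm
        omega
      have hpa : G.dist p a = k := by
        rcases dist_adj_cases hmed a hu'p with h | h
        · have c1 : G.dist p a = G.dist a p := SimpleGraph.dist_comm
          have c2 : G.dist p a ≤ G.dist p b + G.dist b a := hconn.dist_triangle
          have c3 : G.dist b a = 1 := SimpleGraph.dist_eq_one_iff_adj.mpr hab.symm
          omega
        · have c1 : G.dist p a = G.dist a p := SimpleGraph.dist_comm
          omega
      have hwa : G.dist w a + 1 = k := by omega
      have ihwp := ih (k - 1) (by omega) w p (by omega) (by omega) (by omega) hwp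
      refine ihwp.tail ?_
      refine ⟨w, p, u, u', ⟨hwp, huu', huw.symm, hu'p.symm, ?_, ?_⟩, rfl, rfl⟩
      · intro h; rw [h] at hwa; omega
      · intro h; rw [h] at hpb'; omega

/-- between a vertex on the `a`-side and one on the `b`-side there is a crossing
edge on a common geodesic -/
lemma exists_crossing (hmed : MedianGraph G) (hab : G.Adj a b) :
    ∀ n x z, G.dist x z = n → G.dist x a < G.dist x b → G.dist z b < G.dist z a →
    ∃ p p', G.dist p a < G.dist p b ∧ G.dist p' b < G.dist p' a ∧ G.Adj p p' ∧
      G.dist x p + (1 + G.dist p' z) = G.dist x z := by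
  have hconn := hmed.1
  intro n
  induction n using Nat.strong_induction_on with
  | _ n ih =>
    intro x z hn hx hz
    have hxz : G.dist x z ≠ 0 := by
      intro h0
      have : x = z := hconn.dist_eq_zero_iff.mp h0
      subst this
      omega
    obtain ⟨w, hxw, hw⟩ := first_step hconn hxz
    have hwside := dist_ne_of_adj hmed a hxw
    have hwa : G.dist a w = G.dist w a := SimpleGraph.dist_comm
    have hwb : G.dist b w = G.dist w b := SimpleGraph.dist_comm
    by_cases hcase : G.dist w b < G.dist w a
    · exact ⟨x, w, hx, hcase, hxw, by
        have : G.dist x x = 0 := SimpleGraph.dist_self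
        omega⟩
    · have hwab : G.dist w a < G.dist w b := by
        have := dist_ne_of_adj hmed a hxw
        have c2 := dist_ne_of_adj hmed b hxw
        have c3 : G.dist a x = G.dist x a := SimpleGraph.dist_comm
        have c4 : G.dist b x = G.dist x b := SimpleGraph.dist_comm
        have c7 := dist_ne_of_adj hmed w hab
        omega
      obtain ⟨p, p', h1, h2, h3, h4⟩ := ih (G.dist w z) (by omega) w z rfl hwab hz
      refine ⟨p, p', h1, h2, h3, ?_⟩
      -- p lies on a geodesic from x to z
      have t1 : G.dist x p ≤ G.dist x w + G.dist w p := hconn.dist_triangle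
      have t2 : G.dist x z ≤ G.dist x p + G.dist p z := hconn.dist_triangle
      have t3 : G.dist p z ≤ G.dist p p' + G.dist p' z := hconn.dist_triangle
      have t4 : G.dist w z ≤ G.dist w p + G.dist p z := hconn.dist_triangle
      have e1 : G.dist x w = 1 := SimpleGraph.dist_eq_one_iff_adj.mpr hxw
      have e2 : G.dist p p' = 1 := SimpleGraph.dist_eq_one_iff_adj.mpr h3
      omega

/-- halfspaces are convex -/
lemma convex_W (hmed : MedianGraph G) (hab : G.Adj a b) {x y z : V}
    (hx : G.dist x a < G.dist x b) (hy : G.dist y a < G.dist y b)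
    (hz : G.dist x z + G.dist z y = G.dist x y) : G.dist z a < G.dist z b := by
  have hconn := hmed.1
  by_contra hcon
  have hzb : G.dist z b < G.dist z a := by
    have := dist_ne_of_adj hmed z hab
    have c1 : G.dist z a = G.dist a z := SimpleGraph.dist_comm
    have c2 : G.dist z b = G.dist b z := SimpleGraph.dist_comm
    have c3 := dist_adj_cases hmed z hab
    omega
  obtain ⟨p, p', hp, hp', hpp', hsum⟩ := exists_crossing hmed hab (G.dist x z) x z rfl hx hzb
  -- the crossing edge is in the Θ-class of ab, so it has the same sidedness
  have hrtg := crossing_in_class hmed hab (G.dist p a) p p' rfl hp hp' hpp'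
  obtain ⟨s, t, hst, hadj, hiff⟩ := class_sided hmed hab hrtg
  -- orientation : s = p, t = p'
  have horient : ∀ w, G.dist w p < G.dist w p' ↔ G.dist w a < G.dist w b := by
    rcases Sym2.eq_iff.mp hst with ⟨h1, h2⟩ | ⟨h1, h2⟩
    · rw [h1, h2]; exact hiff
    · -- s = p', t = p : contradiction by evaluating at p
      exfalso
      have := (hiff p).mpr hp
      rw [← h1, ← h2] at this
      have e1 : G.dist p p = 0 := SimpleGraph.dist_self
      have e2 : G.dist p p' = 1 := SimpleGraph.dist_eq_one_iff_adj.mpr hpp'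
      omega
  have hyp := (horient y).mpr hy
  -- but p' is strictly closer to y than p, since both lie on a geodesic from x through z to y
  have t1 : G.dist p z ≤ G.dist p p' + G.dist p' z := hconn.dist_triangle
  have t2 : G.dist x z ≤ G.dist x p + G.dist p z := hconn.dist_triangle
  have e2 : G.dist p p' = 1 := SimpleGraph.dist_eq_one_iff_adj.mpr hpp'
  -- derive dist x p + dist p z = dist x z and dist p z = 1 + dist p' z
  have hpz : G.dist x p + G.dist p z = G.dist x z ∧ G.dist p z = 1 + G.dist p' z := by
    constructor <;> omega
  obtain ⟨hq1, hq2⟩ := hpz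
  -- p ∈ I(x,y) : dist x p + dist p y = dist x y
  have t3 : G.dist x y ≤ G.dist x p + G.dist p y := hconn.dist_triangle
  have t4 : G.dist p y ≤ G.dist p z + G.dist z y := hconn.dist_triangle
  have hpy : G.dist p y = G.dist p z + G.dist z y := by omega
  have t5 : G.dist p' y ≤ G.dist p' z + G.dist z y := hconn.dist_triangle
  -- so dist p' y ≤ dist p y - 1, contradicting hyp
  have c1 : G.dist y p = G.dist p y := SimpleGraph.dist_comm
  have c2 : G.dist y p' = G.dist p' y := SimpleGraph.dist_comm
  omega

lemma side_succ (hmed : MedianGraph G) (hab : G.Adj a b) (hx : G.dist x a < G.dist x b) :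
    G.dist x b = G.dist x a + 1 := by
  rcases dist_adj_cases hmed x hab with h | h <;> omega

/-- the edges of a Θ-class form a matching -/
lemma matching_aux (hmed : MedianGraph G) (hab : G.Adj a b) {x y y' : V}
    (hx : G.dist x a < G.dist x b) (hy : G.dist y b < G.dist y a)
    (hy' : G.dist y' b < G.dist y' a) (hxy : G.Adj x y) (hxy' : G.Adj x y')
    (hne : y ≠ y') : False := by
  obtain ⟨hconn, hm⟩ := id hmed
  have hxb := side_succ hmed hab hx
  have hya : G.dist y a = G.dist y b + 1 := by
    rcases dist_adj_cases hmed y hab with h | h <;> omega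
  have hy'a : G.dist y' a = G.dist y' b + 1 := by
    rcases dist_adj_cases hmed y' hab with h | h <;> omega
  -- dist y a = dist x a + 1 etc.
  have hya2 : G.dist y a = G.dist x a + 1 ∧ G.dist y b = G.dist x a := by
    rcases dist_adj_cases hmed a hxy with h | h <;>
    rcases dist_adj_cases hmed b hxy with h2 | h2 <;>
    · have c1 : G.dist a x = G.dist x a := SimpleGraph.dist_comm
      have c2 : G.dist a y = G.dist y a := SimpleGraph.dist_comm
      have c3 : G.dist b x = G.dist x b := SimpleGraph.dist_comm
      have c4 : G.dist b y = G.dist y b := SimpleGraph.dist_comm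
      constructor <;> omega
  have hy'a2 : G.dist y' a = G.dist x a + 1 ∧ G.dist y' b = G.dist x a := by
    rcases dist_adj_cases hmed a hxy' with h | h <;>
    rcases dist_adj_cases hmed b hxy' with h2 | h2 <;>
    · have c1 : G.dist a x = G.dist x a := SimpleGraph.dist_comm
      have c2 : G.dist a y' = G.dist y' a := SimpleGraph.dist_comm
      have c3 : G.dist b x = G.dist x b := SimpleGraph.dist_comm
      have c4 : G.dist b y' = G.dist y' b := SimpleGraph.dist_comm
      constructor <;> omega
  -- quadrangle from b
  have hq := quad hmed (c := b) hxy hxy' hne (by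
      have c3 : G.dist b x = G.dist x b := SimpleGraph.dist_comm
      have c4 : G.dist b y = G.dist y b := SimpleGraph.dist_comm
      omega) (by
      have c3 : G.dist b x = G.dist x b := SimpleGraph.dist_comm
      have c4 : G.dist b y' = G.dist y' b := SimpleGraph.dist_comm
      omega)
  obtain ⟨w, hyw, hy'w, hwb⟩ := hq
  have c3 : G.dist b x = G.dist x b := SimpleGraph.dist_comm
  have cw : G.dist b w = G.dist w b := SimpleGraph.dist_comm
  have hwa : G.dist w a = G.dist x a := by
    rcases dist_adj_cases hmed a hyw with h | h <;>
    · have c1 : G.dist a w = G.dist w a := SimpleGraph.dist_comm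
      have c2 : G.dist a y = G.dist y a := SimpleGraph.dist_comm
      have t : G.dist w a ≤ G.dist w b + G.dist b a := hconn.dist_triangle
      have e : G.dist b a = 1 := SimpleGraph.dist_eq_one_iff_adj.mpr hab.symm
      omega
  -- dist y y' = 2
  have hyy'2 : G.dist y y' = 2 := by
    have hnadj : ¬ G.Adj y y' := by
      intro hadj
      have := dist_ne_of_adj hmed x hadj
      have e1 : G.dist x y = 1 := SimpleGraph.dist_eq_one_iff_adj.mpr hxy
      have e2 : G.dist x y' = 1 := SimpleGraph.dist_eq_one_iff_adj.mpr hxy'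
      omega
    have h1 : G.dist y y' ≤ G.dist y x + G.dist x y' := hconn.dist_triangle
    have e1 : G.dist y x = 1 := SimpleGraph.dist_eq_one_iff_adj.mpr hxy.symm
    have e2 : G.dist x y' = 1 := SimpleGraph.dist_eq_one_iff_adj.mpr hxy'
    have h0 : G.dist y y' ≠ 0 := fun hh => hne (hconn.dist_eq_zero_iff.mp hh)
    have h1' : G.dist y y' ≠ 1 := fun hh => hnadj (SimpleGraph.dist_eq_one_iff_adj.mp hh)
    omega
  -- x and w are both medians of (y, y', a)
  obtain ⟨m, -, hun⟩ := hm y y' a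
  have ex1 : G.dist y x + G.dist x y' = G.dist y y' := by
    have e1 : G.dist y x = 1 := SimpleGraph.dist_eq_one_iff_adj.mpr hxy.symm
    have e2 : G.dist x y' = 1 := SimpleGraph.dist_eq_one_iff_adj.mpr hxy'
    omega
  have ex2 : G.dist y' x + G.dist x a = G.dist y' a := by
    have e1 : G.dist y' x = 1 := SimpleGraph.dist_eq_one_iff_adj.mpr hxy'.symm
    omega
  have ex3 : G.dist a x + G.dist x y = G.dist a y := by
    have e1 : G.dist x y = 1 := SimpleGraph.dist_eq_one_iff_adj.mpr hxy
    have c1 : G.dist a x = G.dist x a := SimpleGraph.dist_comm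
    have c2 : G.dist a y = G.dist y a := SimpleGraph.dist_comm
    omega
  have hxm : x = m := hun x ⟨ex1, ex2, ex3⟩
  have ew1 : G.dist y w + G.dist w y' = G.dist y y' := by
    have e1 : G.dist y w = 1 := SimpleGraph.dist_eq_one_iff_adj.mpr hyw
    have e2 : G.dist w y' = 1 := SimpleGraph.dist_eq_one_iff_adj.mpr hy'w.symm
    omega
  have ew2 : G.dist y' w + G.dist w a = G.dist y' a := by
    have e1 : G.dist y' w = 1 := SimpleGraph.dist_eq_one_iff_adj.mpr hy'w
    omega
  have ew3 : G.dist a w + G.dist w y = G.dist a y := by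
    have e1 : G.dist w y = 1 := SimpleGraph.dist_eq_one_iff_adj.mpr hyw.symm
    have c1 : G.dist a w = G.dist w a := SimpleGraph.dist_comm
    have c2 : G.dist a y = G.dist y a := SimpleGraph.dist_comm
    omega
  have hwm : w = m := hun w ⟨ew1, ew2, ew3⟩
  rw [← hxm] at hwm
  rw [hwm] at hwb
  omega

lemma theta0_symm : Symmetric (Theta0 G) := by
  rintro e f ⟨u, v, x, y, hsq, rfl, rfl⟩
  exact ⟨x, y, u, v, isSquare_swap hsq, rfl, rfl⟩

/-- sidedness of an edge Θ-related to ab -/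
lemma side_of_mem_class (hmed : MedianGraph G) (hab : G.Adj a b) {p q : V}
    (hf : Relation.ReflTransGen (Theta0 G) s(a, b) s(p, q)) :
    (G.dist p a < G.dist p b ∧ G.dist q b < G.dist q a) ∨
    (G.dist q a < G.dist q b ∧ G.dist p b < G.dist p a) := by
  obtain ⟨s, t, hst, hadj, hiff⟩ := class_sided hmed hab hf
  have hs : G.dist s a < G.dist s b := by
    refine (hiff s).mp ?_
    have e1 : G.dist s s = 0 := SimpleGraph.dist_self
    have e2 : G.dist s t = 1 := SimpleGraph.dist_eq_one_iff_adj.mpr hadj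
    omega
  have ht : G.dist t b < G.dist t a := by
    have hnt : ¬ G.dist t a < G.dist t b := by
      intro hh
      have := (hiff t).mpr hh
      have e1 : G.dist t t = 0 := SimpleGraph.dist_self
      have e2 : G.dist t s = 1 := SimpleGraph.dist_eq_one_iff_adj.mpr hadj.symm
      omega
    have := dist_ne_of_adj hmed t hab
    have c1 : G.dist t a = G.dist a t := SimpleGraph.dist_comm
    have c2 : G.dist t b = G.dist b t := SimpleGraph.dist_comm
    omega
  rcases Sym2.eq_iff.mp hst with ⟨h1, h2⟩ | ⟨h1, h2⟩
  · left; rw [h1, h2]; exact ⟨hs, ht⟩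
  · right; rw [h1, h2]; exact ⟨hs, ht⟩

section WithClass

variable {C : Set (Sym2 V)}

/-- within a halfspace, vertices are connected avoiding the class -/
lemma reach_within (hmed : MedianGraph G) (hab : G.Adj a b)
    (hC : C = {f | Theta G s(a, b) f}) :
    ∀ n x y, G.dist x y = n → G.dist x a < G.dist x b → G.dist y a < G.dist y b →
      (G.deleteEdges C).Reachable x y := by
  have hconn := hmed.1
  intro n
  induction n using Nat.strong_induction_on with
  | _ n ih =>
    intro x y hn hx hy
    rcases Nat.eq_zero_or_pos n with h0 | hpos
    · subst h0
      have : x = y := hconn.dist_eq_zero_iff.mp hn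
      subst this
      exact SimpleGraph.Reachable.refl x
    · obtain ⟨w, hxw, hw⟩ := first_step hconn (u := x) (v := y) (by omega)
      have hwside : G.dist w a < G.dist w b := by
        refine convex_W hmed hab hx hy ?_
        have e1 : G.dist x w = 1 := SimpleGraph.dist_eq_one_iff_adj.mpr hxw
        omega
      have hnotC : s(x, w) ∉ C := by
        intro hmem
        rw [hC] at hmem
        obtain ⟨-, -, hrtg⟩ := hmem
        rcases side_of_mem_class hmed hab hrtg with ⟨h1, h2⟩ | ⟨h1, h2⟩ <;> omega
      have hadj' : (G.deleteEdges C).Adj x w := by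
        rw [SimpleGraph.deleteEdges_adj]
        exact ⟨hxw, hnotC⟩
      exact hadj'.reachable.trans (ih (G.dist w y) (by omega) w y rfl hwside hy)

/-- moving along an edge of `G - C` preserves the halfspace -/
lemma closed_side (hmed : MedianGraph G) (hab : G.Adj a b)
    (hC : C = {f | Theta G s(a, b) f}) {p q : V}
    (hadj : (G.deleteEdges C).Adj p q) (hp : G.dist p a < G.dist p b) :
    G.dist q a < G.dist q b := by
  rw [SimpleGraph.deleteEdges_adj] at hadj
  obtain ⟨hpq, hnC⟩ := hadj
  by_contra hcon
  have hq : G.dist q b < G.dist q a := by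
    have := dist_ne_of_adj hmed q hab
    have c1 : G.dist q a = G.dist a q := SimpleGraph.dist_comm
    have c2 : G.dist q b = G.dist b q := SimpleGraph.dist_comm
    omega
  have hrtg := crossing_in_class hmed hab (G.dist p a) p q rfl hp hq hpq
  exact hnC (by rw [hC]; exact ⟨(SimpleGraph.mem_edgeSet G).mpr hab, (SimpleGraph.mem_edgeSet G).mpr hpq, hrtg⟩)

lemma walk_side (hmed : MedianGraph G) (hab : G.Adj a b)
    (hC : C = {f | Theta G s(a, b) f}) {x y : V}
    (hreach : (G.deleteEdges C).Reachable x y) (hx : G.dist x a < G.dist x b) :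
    G.dist y a < G.dist y b := by
  obtain ⟨p⟩ := hreach
  induction p with
  | nil => exact hx
  | cons hadj q ihp => exact ihp (closed_side hmed hab hC hadj hx)

end WithClass

end Aux


section Pairs

variable {G : SimpleGraph V} {C : Set (Sym2 V)} {a b : V} {H H' K K' : Set V}

lemma pair_W (hmed : MedianGraph G) (hab : G.Adj a b)
    (hC : C = {f | Theta G s(a, b) f}) :
    IsHalfspacePair G C {x | G.dist x a < G.dist x b} {x | G.dist x b < G.dist x a} := by
  have hconn := hmed.1
  have hC' : C = {f | Theta G s(b, a) f} := by
    rw [(Sym2.eq_swap : s(b, a) = s(a, b))]; exact hC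
  refine ⟨⟨a, ?_⟩, ⟨b, ?_⟩, ?_, ?_, ?_, ?_, ?_⟩
  · have e1 : G.dist a a = 0 := SimpleGraph.dist_self
    have e2 : G.dist a b = 1 := SimpleGraph.dist_eq_one_iff_adj.mpr hab
    simp only [Set.mem_setOf_eq]; omega
  · have e1 : G.dist b b = 0 := SimpleGraph.dist_self
    have e2 : G.dist b a = 1 := SimpleGraph.dist_eq_one_iff_adj.mpr hab.symm
    simp only [Set.mem_setOf_eq]; omega
  · exact Set.disjoint_left.mpr fun x hx hx' => by
      simp only [Set.mem_setOf_eq] at hx hx'; omega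
  · refine Set.eq_univ_iff_forall.mpr fun x => ?_
    have h := dist_ne_of_adj hmed x hab
    simp only [Set.mem_union, Set.mem_setOf_eq]
    omega
  · exact fun x hx y hy => reach_within hmed hab hC (G.dist x y) x y rfl hx hy
  · exact fun x hx y hy => reach_within hmed hab.symm hC' (G.dist x y) x y rfl hx hy
  · intro x hx y hy hr
    have := walk_side hmed hab hC hr hx
    simp only [Set.mem_setOf_eq] at hy this
    omega

lemma pair_swap (hp : IsHalfspacePair G C H H') : IsHalfspacePair G C H' H := by
  obtain ⟨h1, h2, h3, h4, h5, h6, h7⟩ := hp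
  exact ⟨h2, h1, h3.symm, by rw [Set.union_comm]; exact h4, h6, h5,
    fun x hx y hy hr => h7 y hy x hx hr.symm⟩

lemma pair_mem_eq (hp : IsHalfspacePair G C H H') (hq : IsHalfspacePair G C K K')
    {w : V} (hw : w ∈ H) (hw' : w ∈ K) : H = K := by
  obtain ⟨-, -, -, hHu, hH5, -, hH7⟩ := hp
  obtain ⟨-, -, -, hKu, hK5, -, hK7⟩ := hq
  ext x
  constructor
  · intro hx
    have hr := hH5 w hw x hx
    have hx2 : x ∈ K ∪ K' := hKu ▸ Set.mem_univ x
    rcases hx2 with h | h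
    · exact h
    · exact absurd hr (hK7 w hw' x h)
  · intro hx
    have hr := hK5 w hw' x hx
    have hx2 : x ∈ H ∪ H' := hHu ▸ Set.mem_univ x
    rcases hx2 with h | h
    · exact h
    · exact absurd hr (hH7 w hw x h)

end Pairs

/-- In a median graph, every Θ-class `C` splits the graph into
exactly two connected components (halfspaces), its edges form a matching, both
halfspaces are convex, and for an edge `uv ∈ C` with `u ∈ H`, `v ∈ H'` the
halfspaces are `W(u,v)` and `W(v,u)`. -/
theorem halfspaces_of_theta_class {V : Type*} [Fintype V] (G : SimpleGraph V)
    (hmed : MedianGraph G) (C : Set (Sym2 V)) (hC : ThetaClass G C) :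
    (∃ H H' : Set V, IsHalfspacePair G C H H') ∧
    (∀ e ∈ C, ∀ f ∈ C, e ≠ f → ∀ x : V, x ∈ e → x ∉ f) ∧
    (∀ H H' : Set V, IsHalfspacePair G C H H' →
      ConvexSet G H ∧ ConvexSet G H' ∧
      ∀ u v : V, s(u, v) ∈ C → u ∈ H → v ∈ H' →
        H = {x | G.dist x u < G.dist x v} ∧
        H' = {x | G.dist x v < G.dist x u}) := by
  have hconn := hmed.1
  obtain ⟨e₀, he₀, hCeq⟩ := hC
  revert he₀ hCeq
  induction e₀ using Sym2.ind with
  | _ a b =>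
  intro he₀ hCeq
  have hab : G.Adj a b := (SimpleGraph.mem_edgeSet G).mp he₀
  have hpairW := pair_W hmed hab hCeq
  refine ⟨⟨_, _, hpairW⟩, ?_, ?_⟩
  · -- matching
    rintro e he f hf hne x hxe hxf
    obtain ⟨y, rfl⟩ := Sym2.mem_iff_exists.mp hxe
    obtain ⟨y', rfl⟩ := Sym2.mem_iff_exists.mp hxf
    have hyy' : y ≠ y' := fun h => hne (by rw [h])
    rw [hCeq] at he hf
    have hadjxy : G.Adj x y := (SimpleGraph.mem_edgeSet G).mp he.2.1
    have hadjxy' : G.Adj x y' := (SimpleGraph.mem_edgeSet G).mp hf.2.1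
    rcases side_of_mem_class hmed hab he.2.2 with ⟨hx1, hy1⟩ | ⟨hy1, hx1⟩ <;>
      rcases side_of_mem_class hmed hab hf.2.2 with ⟨hx2, hy2⟩ | ⟨hy2, hx2⟩
    · exact matching_aux hmed hab hx1 hy1 hy2 hadjxy hadjxy' hyy'
    · omega
    · omega
    · exact matching_aux hmed hab.symm hx1 hy1 hy2 hadjxy hadjxy' hyy'
  · -- arbitrary halfspace pairs
    intro H H' hpair
    have hHeq : ∀ J J', IsHalfspacePair G C J J' →
        J = {x | G.dist x a < G.dist x b} ∨ J = {x | G.dist x b < G.dist x a} := by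
      intro J J' hp
      obtain ⟨⟨h₀, hh₀⟩, -⟩ := id hp
      have hside := dist_ne_of_adj hmed h₀ hab
      rcases lt_or_gt_of_ne hside with h | h
      · exact Or.inl (pair_mem_eq hp hpairW hh₀ h)
      · exact Or.inr (pair_mem_eq hp (pair_swap hpairW) hh₀ h)
    have hconvex : ∀ J J', IsHalfspacePair G C J J' → ConvexSet G J := by
      intro J J' hp
      rcases hHeq J J' hp with h | h <;> subst h <;> intro u hu v hv w hw
      · exact convex_W hmed hab hu hv hw
      · exact convex_W hmed hab.symm hu hv hw
    refine ⟨hconvex H H' hpair, hconvex H' H (pair_swap hpair), ?_⟩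
    intro u v huvC huH hvH'
    have hTuv : Theta G s(a, b) s(u, v) := by rw [hCeq] at huvC; exact huvC
    have hadjuv : G.Adj u v := (SimpleGraph.mem_edgeSet G).mp hTuv.2.1
    have hCuv : C = {f | Theta G s(u, v) f} := by
      ext f
      rw [hCeq]
      simp only [Set.mem_setOf_eq]
      constructor
      · rintro ⟨he1, he2, hr⟩
        exact ⟨hTuv.2.1, he2,
          ((@Relation.ReflTransGen.stdSymm _ _ ⟨@theta0_symm _ G⟩).symm _ _ hTuv.2.2).trans hr⟩
      · rintro ⟨he1, he2, hr⟩
        exact ⟨hTuv.1, he2, hTuv.2.2.trans hr⟩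
    have hpairUV := pair_W hmed hadjuv hCuv
    have huW : u ∈ {x | G.dist x u < G.dist x v} := by
      have e1 : G.dist u u = 0 := SimpleGraph.dist_self
      have e2 : G.dist u v = 1 := SimpleGraph.dist_eq_one_iff_adj.mpr hadjuv
      simp only [Set.mem_setOf_eq]; omega
    have hvW : v ∈ {x | G.dist x v < G.dist x u} := by
      have e1 : G.dist v v = 0 := SimpleGraph.dist_self
      have e2 : G.dist v u = 1 := SimpleGraph.dist_eq_one_iff_adj.mpr hadjuv.symm
      simp only [Set.mem_setOf_eq]; omega
    exact ⟨pair_mem_eq hpair hpairUV huH huW,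
      pair_mem_eq (pair_swap hpair) (pair_swap hpairUV) hvH' hvW⟩


end MedianPaper
end

section
/- In a median graph G, for every Θ-class E_i: both boundaries ∂H_i' and ∂H_i'' are convex, and the edges of E_i define an isomorphism between the subgraphs induced on ∂H_i' and ∂H_i'' (each vertex of ∂H_i' is matched by E_i to a unique vertex of ∂H_i'', and two vertices of ∂H_i' are adjacent if and only if their E_i-partners in ∂H_i'' are adjacent). -/
namespace MedianPaper

variable {V : Type*}

section Aux

variable {G : SimpleGraph V} {a b u v w x y z : V}

lemma mem_interval : w ∈ interval G u v ↔ G.dist u w + G.dist w v = G.dist u v := Iff.rfl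

lemma dist_adj (hadj : G.Adj a b) : G.dist a b = 1 := SimpleGraph.dist_eq_one_iff_adj.mpr hadj

lemma dcomm {u v : V} : G.dist u v = G.dist v u := SimpleGraph.dist_comm

lemma dist_zero (hc : G.Connected) (h : G.dist a b = 0) : a = b :=
  (hc.dist_eq_zero_iff).mp h

/-- Bipartite-type lemma. -/
lemma bip (hmed : MedianGraph G) (hxy : G.Adj x y) (v : V) :
    G.dist v x ≠ G.dist v y := by
  obtain ⟨m, h1, h2, h3⟩ := (hmed.2 v x y).exists
  have hc := hmed.1
  rw [mem_interval] at h1 h2 h3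
  rw [dist_adj hxy] at h2
  rcases Nat.eq_zero_or_pos (G.dist x m) with h0 | hpos
  · have hmx : x = m := dist_zero hc h0
    subst hmx
    have c1 : G.dist y x = G.dist x y := dcomm
    have c2 : G.dist x v = G.dist v x := dcomm
    have c3 : G.dist y v = G.dist v y := dcomm
    have c4 : G.dist x x = 0 := SimpleGraph.dist_self
    omega
  · have hmy : m = y := dist_zero hc (show G.dist m y = 0 by omega)
    subst hmy
    have c1 : G.dist v m = G.dist m v := dcomm
    have c2 : G.dist m x = G.dist x m := dcomm
    have c4 : G.dist m m = 0 := SimpleGraph.dist_self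
    omega

/-- distances to the ends of an edge differ by exactly one. -/
lemma diff_one (hmed : MedianGraph G) (hxy : G.Adj x y) (v : V) :
    G.dist v y = G.dist v x + 1 ∨ G.dist v x = G.dist v y + 1 := by
  have h1 : G.dist v y ≤ G.dist v x + 1 := by
    have := hmed.1.dist_triangle (u := v) (v := x) (w := y)
    rwa [dist_adj hxy] at this
  have h2 : G.dist v x ≤ G.dist v y + 1 := by
    have := hmed.1.dist_triangle (u := v) (v := y) (w := x)
    rwa [dist_adj hxy.symm] at this
  have := bip hmed hxy v
  omega

/-- The halfspace of vertices closer to `a` than to `b`. -/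
def HS (G : SimpleGraph V) (a b : V) : Set V := {v | G.dist v a < G.dist v b}

lemma mem_HS : v ∈ HS G a b ↔ G.dist v a < G.dist v b := Iff.rfl

lemma not_mem_HS (hmed : MedianGraph G) (hab : G.Adj a b) :
    v ∉ HS G a b ↔ v ∈ HS G b a := by
  have := diff_one hmed hab v
  simp only [mem_HS]
  omega

/-- crossing-edge distance facts -/
lemma cross (hmed : MedianGraph G) (hab : G.Adj a b) (hvv' : G.Adj v w)
    (hv : v ∈ HS G a b) (hw : w ∉ HS G a b) :
    G.dist w a = G.dist v a + 1 ∧ G.dist v b = G.dist w b + 1 := by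
  rw [not_mem_HS hmed hab] at hw
  have h1 := diff_one hmed hab v
  have h2 := diff_one hmed hab w
  have h3 := diff_one hmed hvv' a
  have h4 := diff_one hmed hvv' b
  have c1 : G.dist a v = G.dist v a := dcomm
  have c2 : G.dist a w = G.dist w a := dcomm
  have c3 : G.dist b v = G.dist v b := dcomm
  have c4 : G.dist b w = G.dist w b := dcomm
  have hv' : G.dist v a < G.dist v b := hv
  have hw' : G.dist w b < G.dist w a := hw
  omega

lemma dist_two (hmed : MedianGraph G) (h1 : G.Adj x u) (h2 : G.Adj x v)
    (hne : u ≠ v) : G.dist u v = 2 := by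
  have hc := hmed.1
  have hne2 : ¬ G.Adj u v := by
    intro h
    exact bip hmed h x (by rw [dist_adj h1, dist_adj h2])
  have hle : G.dist u v ≤ 2 := by
    have t := hc.dist_triangle (u := u) (v := x) (w := v)
    have t1 : G.dist u x = G.dist x u := dcomm
    rw [dist_adj h1] at t1
    rw [dist_adj h2] at t
    omega
  have h0 : G.dist u v ≠ 0 := fun h => hne (dist_zero hc h)
  have h1' : G.dist u v ≠ 1 := fun h => hne2 (SimpleGraph.dist_eq_one_iff_adj.mp h)
  omega

lemma sq_core (hmed : MedianGraph G) {u v w x y : V}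
    (e1 : G.Adj v w) (e2 : G.Adj x y) (e3 : G.Adj v x) (e4 : G.Adj w y)
    (h5 : v ≠ y) (h6 : w ≠ x)
    (hvw : G.dist u v < G.dist u w) (hyx : G.dist u y < G.dist u x) : False := by
  have d1 := diff_one hmed e1 u
  have d2 := diff_one hmed e2 u
  have d3 := diff_one hmed e3 u
  have d4 := diff_one hmed e4 u
  have hw : G.dist u w = G.dist u v + 1 := by omega
  have hx : G.dist u x = G.dist u v + 1 := by omega
  have hy : G.dist u y = G.dist u v := by omega
  have hxw : G.dist x w = 2 := dist_two hmed e3 e1 (fun h => h6 h.symm)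
  have m1 : v ∈ interval G u x ∧ v ∈ interval G x w ∧ v ∈ interval G w u := by
    refine ⟨?_, ?_, ?_⟩ <;> rw [mem_interval]
    · have c1 : G.dist v x = 1 := dist_adj e3
      omega
    · have c1 : G.dist x v = G.dist v x := dcomm
      have c2 : G.dist v x = 1 := dist_adj e3
      have c3 : G.dist v w = 1 := dist_adj e1
      omega
    · have c1 : G.dist w v = G.dist v w := dcomm
      have c2 : G.dist v w = 1 := dist_adj e1
      have c3 : G.dist v u = G.dist u v := dcomm
      have c4 : G.dist w u = G.dist u w := dcomm
      omega
  have m2 : y ∈ interval G u x ∧ y ∈ interval G x w ∧ y ∈ interval G w u := by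
    refine ⟨?_, ?_, ?_⟩ <;> rw [mem_interval]
    · have c1 : G.dist y x = G.dist x y := dcomm
      have c2 : G.dist x y = 1 := dist_adj e2
      omega
    · have c1 : G.dist x y = 1 := dist_adj e2
      have c2 : G.dist y w = G.dist w y := dcomm
      have c3 : G.dist w y = 1 := dist_adj e4
      omega
    · have c1 : G.dist w y = 1 := dist_adj e4
      have c2 : G.dist y u = G.dist u y := dcomm
      have c3 : G.dist w u = G.dist u w := dcomm
      omega
  exact h5 ((hmed.2 u x w).unique m1 m2)

/-- The square lemma: opposite edges of a 4-cycle induce the same vertex partition. -/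
lemma square_lemma (hmed : MedianGraph G)
    (e1 : G.Adj v w) (e2 : G.Adj x y) (e3 : G.Adj v x) (e4 : G.Adj w y)
    (h5 : v ≠ y) (h6 : w ≠ x) (u : V) :
    (G.dist u v < G.dist u w ↔ G.dist u x < G.dist u y) := by
  constructor
  · intro h
    by_contra h2
    have d2 := diff_one hmed e2 u
    have hyx : G.dist u y < G.dist u x := by omega
    exact sq_core hmed e1 e2 e3 e4 h5 h6 h hyx
  · intro h
    by_contra h2
    have d1 := diff_one hmed e1 u
    have hwv : G.dist u w < G.dist u v := by omega
    exact sq_core hmed e1.symm e2.symm e4 e3 h6 h5 hwv h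

/-- step towards a target along a geodesic -/
lemma step_toward (hc : G.Connected) (h : G.dist v a ≠ 0) :
    ∃ s, G.Adj v s ∧ G.dist s a + 1 = G.dist v a := by
  obtain ⟨p, hp⟩ := SimpleGraph.exists_walk_of_dist_ne_zero h
  cases p with
  | nil => simp at hp; exact absurd SimpleGraph.dist_self h
  | @cons _ s _ hadj q =>
    refine ⟨s, hadj, ?_⟩
    have h1 : G.dist s a ≤ q.length := SimpleGraph.dist_le q
    have h2 : G.dist v a ≤ G.dist v s + G.dist s a := hc.dist_triangle
    rw [dist_adj hadj] at h2
    simp [SimpleGraph.Walk.length_cons] at hp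
    omega

/-- `I(u,a) ⊆ W(a,b)` for `u ∈ W(a,b)`. -/
lemma interval_subset_HS (hmed : MedianGraph G) (hab : G.Adj a b)
    (hu : u ∈ HS G a b) : interval G u a ⊆ HS G a b := by
  intro t ht
  rw [mem_interval] at ht
  by_contra hnt
  rw [not_mem_HS hmed hab, mem_HS] at hnt
  have hu' : G.dist u a < G.dist u b := hu
  have d1 := diff_one hmed hab t
  have htri : G.dist u b ≤ G.dist u t + G.dist t b := hmed.1.dist_triangle
  omega

/-- Key lemma: all edges crossing the cut of `ab` induce the same halfspaces. -/
lemma cross_consistent (hmed : MedianGraph G) (hab : G.Adj a b) :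
    ∀ r : ℕ, ∀ v w : V, G.Adj v w → v ∈ HS G a b → w ∉ HS G a b → G.dist v a = r →
    ∀ u ∈ HS G a b, G.dist u v < G.dist u w := by
  intro r
  induction r with
  | zero =>
    intro v w hvw hv hw hr u hu
    have hva : v = a := dist_zero hmed.1 hr
    obtain ⟨c1, c2⟩ := cross hmed hab hvw hv hw
    have hwb : w = b := by
      apply dist_zero hmed.1
      rw [hva, dist_adj hab] at c2
      omega
    rw [hva, hwb]
    exact hu
  | succ r ih =>
    intro v w hvw hv hw hr u hu
    obtain ⟨c1, c2⟩ := cross hmed hab hvw hv hw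
    have hv' : G.dist v a < G.dist v b := hv
    have dv_b : G.dist v b = G.dist v a + 1 := by have := diff_one hmed hab v; omega
    have hw' : G.dist w b < G.dist w a := (not_mem_HS hmed hab).mp hw
    obtain ⟨s, hvs, hsa⟩ := step_toward hmed.1 (a := a) (v := v) (by omega)
    have hs : s ∈ HS G a b := by
      apply interval_subset_HS hmed hab hv
      rw [mem_interval, dist_adj hvs]
      omega
    have hs' : G.dist s a < G.dist s b := hs
    have ds_b : G.dist s b = G.dist s a + 1 := by have := diff_one hmed hab s; omega
    have hsw2 : G.dist s w = 2 := by
      have hne : s ≠ w := by rintro rfl; exact hw hs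
      have e1 : G.dist s v = 1 := by rw [dcomm]; exact dist_adj hvs
      have hnadj : ¬ G.Adj s w := by
        intro h
        have hb := bip hmed hvw s
        have e2 : G.dist s w = 1 := dist_adj h
        omega
      have hle : G.dist s w ≤ 2 := by
        have t := hmed.1.dist_triangle (u := s) (v := v) (w := w)
        rw [dist_adj hvw] at t
        omega
      have h0 : G.dist s w ≠ 0 := fun h => hne (dist_zero hmed.1 h)
      have h1 : G.dist s w ≠ 1 := fun h => hnadj (SimpleGraph.dist_eq_one_iff_adj.mp h)
      omega
    obtain ⟨m, hm1, hm2, hm3⟩ := (hmed.2 s w b).exists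
    rw [mem_interval] at hm1 hm2 hm3
    rw [hsw2] at hm1
    have cbs : G.dist b s = G.dist s b := dcomm
    have cws : G.dist w s = G.dist s w := dcomm
    have cwm : G.dist w m = G.dist m w := dcomm
    have cbm : G.dist b m = G.dist m b := dcomm
    have hsm1 : G.dist s m = 1 := by
      rcases Nat.lt_or_ge (G.dist s m) 1 with h0 | h1
      · exfalso
        have : s = m := dist_zero hmed.1 (by omega)
        subst this
        rw [cws, hsw2] at hm2
        omega
      rcases Nat.lt_or_ge (G.dist m w) 1 with h0 | h2
      · exfalso
        have : m = w := dist_zero hmed.1 (by omega)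
        subst this
        omega
      omega
    have hmw1 : G.dist m w = 1 := by omega
    have hmb : G.dist m b = G.dist w b - 1 := by omega
    have hadj_sm : G.Adj s m := SimpleGraph.dist_eq_one_iff_adj.mp hsm1
    have hadj_mw : G.Adj m w := SimpleGraph.dist_eq_one_iff_adj.mp hmw1
    have hma_lb : G.dist w a ≤ G.dist m a + 1 := by
      have t := hmed.1.dist_triangle (u := w) (v := m) (w := a)
      rw [cwm, hmw1] at t
      omega
    have hm_not : m ∉ HS G a b := by
      rw [not_mem_HS hmed hab]
      have := diff_one hmed hab m
      show G.dist m b < G.dist m a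
      omega
    have hsa' : G.dist s a = r := by omega
    have ihm := ih s m hadj_sm hs hm_not hsa' u hu
    have sq := square_lemma hmed hvw hadj_sm hvs hadj_mw.symm
      (fun h => hm_not (h ▸ hv)) (fun h => hw (h ▸ hs)) u
    exact sq.mpr ihm


/-- Build a square descending towards `a` from a crossing edge. -/
lemma square_down (hmed : MedianGraph G) (hab : G.Adj a b)
    (hvw : G.Adj v w) (hv : v ∈ HS G a b) (hw : w ∉ HS G a b) (hr : G.dist v a ≠ 0) :
    ∃ s m, G.Adj s m ∧ G.Adj v s ∧ G.Adj w m ∧ s ∈ HS G a b ∧ m ∉ HS G a b ∧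
      G.dist s a + 1 = G.dist v a := by
  obtain ⟨c1, c2⟩ := cross hmed hab hvw hv hw
  have hv' : G.dist v a < G.dist v b := hv
  have dv_b : G.dist v b = G.dist v a + 1 := by have := diff_one hmed hab v; omega
  have hw' : G.dist w b < G.dist w a := (not_mem_HS hmed hab).mp hw
  obtain ⟨s, hvs, hsa⟩ := step_toward hmed.1 (a := a) (v := v) hr
  have hs : s ∈ HS G a b := by
    apply interval_subset_HS hmed hab hv
    rw [mem_interval, dist_adj hvs]
    omega
  have hs' : G.dist s a < G.dist s b := hs
  have ds_b : G.dist s b = G.dist s a + 1 := by have := diff_one hmed hab s; omega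
  have hsw2 : G.dist s w = 2 := by
    have hne : s ≠ w := by rintro rfl; exact hw hs
    have e1 : G.dist s v = 1 := by rw [dcomm]; exact dist_adj hvs
    have hnadj : ¬ G.Adj s w := by
      intro h
      have hb := bip hmed hvw s
      have e2 : G.dist s w = 1 := dist_adj h
      omega
    have hle : G.dist s w ≤ 2 := by
      have t := hmed.1.dist_triangle (u := s) (v := v) (w := w)
      rw [dist_adj hvw] at t
      omega
    have h0 : G.dist s w ≠ 0 := fun h => hne (dist_zero hmed.1 h)
    have h1 : G.dist s w ≠ 1 := fun h => hnadj (SimpleGraph.dist_eq_one_iff_adj.mp h)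
    omega
  obtain ⟨m, hm1, hm2, hm3⟩ := (hmed.2 s w b).exists
  rw [mem_interval] at hm1 hm2 hm3
  rw [hsw2] at hm1
  have cbs : G.dist b s = G.dist s b := dcomm
  have cws : G.dist w s = G.dist s w := dcomm
  have cwm : G.dist w m = G.dist m w := dcomm
  have cbm : G.dist b m = G.dist m b := dcomm
  have hsm1 : G.dist s m = 1 := by
    rcases Nat.lt_or_ge (G.dist s m) 1 with h0 | h1
    · exfalso
      have : s = m := dist_zero hmed.1 (by omega)
      subst this
      rw [cws, hsw2] at hm2
      omega
    rcases Nat.lt_or_ge (G.dist m w) 1 with h0 | h2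
    · exfalso
      have : m = w := dist_zero hmed.1 (by omega)
      subst this
      omega
    omega
  have hmw1 : G.dist m w = 1 := by omega
  have hadj_sm : G.Adj s m := SimpleGraph.dist_eq_one_iff_adj.mp hsm1
  have hadj_mw : G.Adj m w := SimpleGraph.dist_eq_one_iff_adj.mp hmw1
  have hma_lb : G.dist w a ≤ G.dist m a + 1 := by
    have t := hmed.1.dist_triangle (u := w) (v := m) (w := a)
    rw [cwm, hmw1] at t
    omega
  have hm_not : m ∉ HS G a b := by
    rw [not_mem_HS hmed hab]
    have := diff_one hmed hab m
    show G.dist m b < G.dist m a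
    omega
  exact ⟨s, m, hadj_sm, hvs, hadj_mw.symm, hs, hm_not, hsa⟩

/-- Halfspaces are convex. -/
lemma HS_convex (hmed : MedianGraph G) (hab : G.Adj a b) :
    ∀ n : ℕ, ∀ u w z : V, u ∈ HS G a b → w ∈ HS G a b → z ∈ interval G u w →
      G.dist u z = n → z ∈ HS G a b := by
  intro n
  induction n with
  | zero =>
    intro u w z hu hw hz h0
    have : u = z := dist_zero hmed.1 h0
    exact this ▸ hu
  | succ n ih =>
    intro u w z hu hw hz h0
    rw [mem_interval] at hz
    obtain ⟨u1, hadj, hu1z⟩ := step_toward hmed.1 (a := z) (v := u) (by omega)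
    have hd1 : G.dist u1 w ≤ G.dist u1 z + G.dist z w := hmed.1.dist_triangle
    have hd2 : G.dist u w ≤ G.dist u u1 + G.dist u1 w := hmed.1.dist_triangle
    rw [dist_adj hadj] at hd2
    have hu1w : G.dist u1 w = G.dist u1 z + G.dist z w := by omega
    have hu1 : u1 ∈ HS G a b := by
      by_contra hnot
      have := cross_consistent hmed hab (G.dist u a) u u1 hadj hu hnot rfl w hw
      have c1 : G.dist w u = G.dist u w := dcomm
      have c2 : G.dist w u1 = G.dist u1 w := dcomm
      omega
    exact ih u1 w z hu1 hw (by rw [mem_interval]; omega) (by omega)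

lemma HS_convex' (hmed : MedianGraph G) (hab : G.Adj a b)
    (hu : u ∈ HS G a b) (hw : w ∈ HS G a b) (hz : z ∈ interval G u w) :
    z ∈ HS G a b :=
  HS_convex hmed hab (G.dist u z) u w z hu hw hz rfl

/-- characterization of the members of the Θ-class of `ab`. -/
lemma theta_mem_char (hmed : MedianGraph G) (hab : G.Adj a b) {f : Sym2 V}
    (hf : Theta G s(a, b) f) :
    ∃ x y, f = s(x, y) ∧ G.Adj x y ∧ ∀ t, t ∈ HS G a b ↔ G.dist t x < G.dist t y := by
  obtain ⟨he, hfe, hrtg⟩ := hf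
  clear hfe
  induction hrtg with
  | refl => exact ⟨a, b, rfl, hab, fun t => Iff.rfl⟩
  | tail hsteps hstep ih =>
    obtain ⟨x0, y0, hmid, hadj0, hinv⟩ := ih
    obtain ⟨p, q, r, t, hsq, hmid', hf'⟩ := hstep
    obtain ⟨a1, a2, a3, a4, a5, a6⟩ := hsq
    subst hmid'
    have sq := fun z => square_lemma hmed a1 a2 a3 a4 a5 a6 z
    rw [Sym2.eq_iff] at hmid
    rcases hmid with ⟨h1, h2⟩ | ⟨h1, h2⟩
    · subst h1; subst h2
      exact ⟨r, t, hf', a2, fun z => (hinv z).trans (sq z)⟩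
    · subst h1; subst h2
      refine ⟨t, r, hf'.trans (Sym2.eq_swap), a2.symm, fun z => ?_⟩
      have b1 := diff_one hmed a1 z
      have b2 := diff_one hmed a2 z
      constructor
      · intro hz
        have hq := (hinv z).mp hz
        have h4 : ¬ (G.dist z p < G.dist z q) := by omega
        have h5 : ¬ (G.dist z r < G.dist z t) := fun hh => h4 ((sq z).mpr hh)
        omega
      · intro hz
        apply (hinv z).mpr
        have h5 : ¬ (G.dist z r < G.dist z t) := by omega
        have h4 : ¬ (G.dist z p < G.dist z q) := fun hh => h5 ((sq z).mp hh)
        omega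

/-- from `s(x,y)` in the Θ-class of `ab` and `x` in the halfspace of `a`,
get the oriented crossing data. -/
lemma partner_spec (hmed : MedianGraph G) (hab : G.Adj a b)
    (hx : x ∈ HS G a b) (hC : Theta G s(a, b) s(x, y)) :
    G.Adj x y ∧ y ∉ HS G a b ∧ ∀ t, t ∈ HS G a b ↔ G.dist t x < G.dist t y := by
  obtain ⟨p, q, hpq, hadj, hinv⟩ := theta_mem_char hmed hab hC
  rw [Sym2.eq_iff] at hpq
  rcases hpq with ⟨h1, h2⟩ | ⟨h1, h2⟩
  · subst h1; subst h2
    refine ⟨hadj, fun hy => ?_, hinv⟩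
    have := (hinv y).mp hy
    simp [SimpleGraph.dist_self] at this
  · subst h1; subst h2
    exfalso
    have := (hinv x).mp hx
    simp [SimpleGraph.dist_self] at this

/-- every crossing edge is in the Θ-class of `ab`. -/
lemma cut_rtg (hmed : MedianGraph G) (hab : G.Adj a b) :
    ∀ r : ℕ, ∀ x y : V, G.Adj x y → x ∈ HS G a b → y ∉ HS G a b → G.dist x a = r →
      Relation.ReflTransGen (Theta0 G) s(a, b) s(x, y) := by
  intro r
  induction r with
  | zero =>
    intro x y hxy hx hy hr
    have hxa : x = a := dist_zero hmed.1 hr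
    obtain ⟨c1, c2⟩ := cross hmed hab hxy hx hy
    have hyb : y = b := by
      apply dist_zero hmed.1
      rw [hxa, dist_adj hab] at c2
      omega
    rw [hxa, hyb]
  | succ r ih =>
    intro x y hxy hx hy hr
    obtain ⟨s, m, hsm, hxs, hym, hs, hm, hsa⟩ :=
      square_down hmed hab hxy hx hy (by omega)
    have step : Theta0 G s(s, m) s(x, y) :=
      ⟨s, m, x, y, ⟨hsm, hxy, hxs.symm, hym.symm,
        fun h => hy (h ▸ hs), fun h => hm (h.symm ▸ hx)⟩, rfl, rfl⟩
    exact (ih s m hsm hs hm (by omega)).tail step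

/-- two vertices in the same halfspace are connected off the Θ-class `C`. -/
lemma reach_same (hmed : MedianGraph G) (hab : G.Adj a b) {C : Set (Sym2 V)}
    (hC : C = {f | Theta G s(a, b) f})
    (hu : u ∈ HS G a b) (hw : w ∈ HS G a b) :
    (G.deleteEdges C).Reachable u w := by
  obtain ⟨p, hp⟩ := hmed.1.exists_walk_length_eq_dist u w
  have hsup : ∀ t ∈ p.support, t ∈ HS G a b := by
    intro t ht
    obtain ⟨q1, q2, hq⟩ := SimpleGraph.Walk.mem_support_iff_exists_append.mp ht
    apply HS_convex' hmed hab hu hw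
    rw [mem_interval]
    have l1 : G.dist u t ≤ q1.length := SimpleGraph.dist_le q1
    have l2 : G.dist t w ≤ q2.length := SimpleGraph.dist_le q2
    have l3 : q1.length + q2.length = G.dist u w := by
      rw [← hp, hq, SimpleGraph.Walk.length_append]
    have l4 : G.dist u w ≤ G.dist u t + G.dist t w := hmed.1.dist_triangle
    omega
  have hedges : ∀ e ∈ p.edges, e ∉ C := by
    intro e he hec
    rw [hC] at hec
    obtain ⟨x', y', hxy', hadj', hinv'⟩ := theta_mem_char hmed hab hec
    subst hxy'
    have hx' : x' ∈ HS G a b :=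
      hsup x' (SimpleGraph.Walk.fst_mem_support_of_mem_edges p he)
    have hy' : y' ∈ HS G a b :=
      hsup y' (SimpleGraph.Walk.snd_mem_support_of_mem_edges p he)
    have b1 := (hinv' y').mp hy'
    simp [SimpleGraph.dist_self] at b1
  exact ⟨p.toDeleteEdges C hedges⟩

/-- vertices in different halfspaces are separated by the Θ-class `C`. -/
lemma reach_diff (hmed : MedianGraph G) (hab : G.Adj a b) {C : Set (Sym2 V)}
    (hC : C = {f | Theta G s(a, b) f})
    (hu : u ∈ HS G a b) (hw : w ∉ HS G a b) :
    ¬ (G.deleteEdges C).Reachable u w := by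
  suffices h : ∀ p q : V, (G.deleteEdges C).Walk p q → p ∈ HS G a b → q ∉ HS G a b → False by
    intro ⟨pw⟩
    exact h u w pw hu hw
  intro p q pw
  induction pw with
  | nil => exact fun h1 h2 => h2 h1
  | @cons p t q hadj pw ih =>
    intro h1 h2
    rw [SimpleGraph.deleteEdges_adj] at hadj
    by_cases ht : t ∈ HS G a b
    · exact ih ht h2
    · apply hadj.2
      rw [hC]
      exact ⟨(SimpleGraph.mem_edgeSet G).mpr hab, (SimpleGraph.mem_edgeSet G).mpr hadj.1,
        cut_rtg hmed hab (G.dist p a) p t hadj.1 h1 ht rfl⟩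

lemma mem_boundary_elim (hmed : MedianGraph G) (hab : G.Adj a b) {C : Set (Sym2 V)}
    (hC : C = {f | Theta G s(a, b) f}) (hx : x ∈ boundarySet G C (HS G a b)) :
    ∃ y, G.Adj x y ∧ y ∉ HS G a b ∧ ∀ t, t ∈ HS G a b ↔ G.dist t x < G.dist t y := by
  obtain ⟨hxH, y, hadj, hyC⟩ := hx
  rw [hC] at hyC
  obtain ⟨h1, h2, h3⟩ := partner_spec hmed hab hxH hyC
  exact ⟨y, h1, h2, h3⟩

lemma mem_boundary_intro (hmed : MedianGraph G) (hab : G.Adj a b) {C : Set (Sym2 V)}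
    (hC : C = {f | Theta G s(a, b) f}) (hx : x ∈ HS G a b) (hy : y ∉ HS G a b)
    (hadj : G.Adj x y) : x ∈ boundarySet G C (HS G a b) := by
  refine ⟨hx, y, hadj, ?_⟩
  rw [hC]
  exact ⟨(SimpleGraph.mem_edgeSet G).mpr hab, (SimpleGraph.mem_edgeSet G).mpr hadj,
    cut_rtg hmed hab (G.dist x a) x y hadj hx hy rfl⟩

lemma crossing_mem_C (hmed : MedianGraph G) (hab : G.Adj a b) {C : Set (Sym2 V)}
    (hC : C = {f | Theta G s(a, b) f}) (hx : x ∈ HS G a b) (hy : y ∉ HS G a b)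
    (hadj : G.Adj x y) : s(x, y) ∈ C := by
  rw [hC]
  exact ⟨(SimpleGraph.mem_edgeSet G).mpr hab, (SimpleGraph.mem_edgeSet G).mpr hadj,
    cut_rtg hmed hab (G.dist x a) x y hadj hx hy rfl⟩

lemma main_bundle (hmed : MedianGraph G) (hab : G.Adj a b) {C : Set (Sym2 V)}
    (hC : C = {f | Theta G s(a, b) f}) :
    ConvexSet G (boundarySet G C (HS G a b)) ∧
    (∀ x ∈ boundarySet G C (HS G a b),
        ∃! y, y ∈ boundarySet G C (HS G b a) ∧ s(x, y) ∈ C) ∧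
    (∀ x x' y y' : V, x ∈ boundarySet G C (HS G a b) → x' ∈ boundarySet G C (HS G a b) →
        y ∈ boundarySet G C (HS G b a) → y' ∈ boundarySet G C (HS G b a) →
        s(x, y) ∈ C → s(x', y') ∈ C → G.Adj x x' → G.Adj y y') := by
  have hC' : C = {f | Theta G s(b, a) f} := by rw [hC, Sym2.eq_swap]
  refine ⟨?_, ?_, ?_⟩
  · -- boundary convexity
    intro u hu w hw z hz
    obtain ⟨u', hadju, hu'n, invu⟩ := mem_boundary_elim hmed hab hC hu
    obtain ⟨w', hadjw, hw'n, invw⟩ := mem_boundary_elim hmed hab hC hw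
    have huH : u ∈ HS G a b := hu.1
    have hwH : w ∈ HS G a b := hw.1
    have hzH : z ∈ HS G a b := HS_convex' hmed hab huH hwH hz
    rw [mem_interval] at hz
    have dzu' : G.dist z u' = G.dist z u + 1 := by
      have h1 := (invu z).mp hzH
      have h2 := diff_one hmed hadju z
      omega
    have dzw' : G.dist z w' = G.dist z w + 1 := by
      have h1 := (invw z).mp hzH
      have h2 := diff_one hmed hadjw z
      omega
    have duw' : G.dist u w' = G.dist u w + 1 := by
      have h1 := (invw u).mp huH
      have h2 := diff_one hmed hadjw u
      omega
    have du'w' : G.dist u' w' = G.dist u w := by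
      have h1 : ¬ (G.dist w' u < G.dist w' u') := fun h => hw'n ((invu w').mpr h)
      have h2 := diff_one hmed hadju w'
      have c1 : G.dist w' u = G.dist u w' := dcomm
      have c2 : G.dist w' u' = G.dist u' w' := dcomm
      omega
    obtain ⟨m, hm1, hm2, hm3⟩ := (hmed.2 z u' w').exists
    rw [mem_interval] at hm1 hm2 hm3
    have c1 : G.dist u z = G.dist z u := dcomm
    have c2 : G.dist w' m = G.dist m w' := dcomm
    have c3 : G.dist w' z = G.dist z w' := dcomm
    have c4 : G.dist m u' = G.dist u' m := dcomm
    have c5 : G.dist m z = G.dist z m := dcomm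
    have hzm : G.dist z m = 1 := by omega
    have hmHba : m ∈ HS G b a := by
      refine HS_convex' hmed hab.symm ((not_mem_HS hmed hab).mp hu'n)
        ((not_mem_HS hmed hab).mp hw'n) ?_
      rw [mem_interval]
      omega
    exact mem_boundary_intro hmed hab hC hzH
      ((not_mem_HS hmed hab).mpr hmHba) (SimpleGraph.dist_eq_one_iff_adj.mp hzm)
  · -- unique matching
    intro x hx
    obtain ⟨y, hadj, hyn, inv⟩ := mem_boundary_elim hmed hab hC hx
    have hxH : x ∈ HS G a b := hx.1
    have hyH : y ∈ HS G b a := (not_mem_HS hmed hab).mp hyn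
    have hxn : x ∉ HS G b a := (not_mem_HS hmed hab.symm).mpr hxH
    refine ⟨y, ⟨mem_boundary_intro hmed hab.symm hC' hyH hxn hadj.symm,
      crossing_mem_C hmed hab hC hxH hyn hadj⟩, ?_⟩
    rintro y2 ⟨hy2b, hy2C⟩
    rw [hC] at hy2C
    obtain ⟨hadj2, hy2n, inv2⟩ := partner_spec hmed hab hxH hy2C
    by_contra hne
    have h2 : G.dist y2 y = 2 := dist_two hmed hadj2 hadj hne
    have hxint : x ∈ interval G y2 y := by
      rw [mem_interval]
      have e1 : G.dist y2 x = 1 := by rw [dcomm]; exact dist_adj hadj2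
      have e2 : G.dist x y = 1 := dist_adj hadj
      omega
    have : x ∈ HS G b a :=
      HS_convex' hmed hab.symm ((not_mem_HS hmed hab).mp hy2n) hyH hxint
    exact hxn this
  · -- adjacency transfer
    intro x x' y y' hx hx' hy hy' hxyC hx'y'C hadjxx'
    have hxH : x ∈ HS G a b := hx.1
    have hx'H : x' ∈ HS G a b := hx'.1
    rw [hC] at hxyC hx'y'C
    obtain ⟨hadj1, hyn, inv1⟩ := partner_spec hmed hab hxH hxyC
    obtain ⟨hadj2, hy'n, inv2⟩ := partner_spec hmed hab hx'H hx'y'C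
    have hne : y ≠ y' := by
      rintro rfl
      exact bip hmed hadjxx' y (by rw [dcomm, dist_adj hadj1, dcomm, dist_adj hadj2])
    have h1 : ¬ (G.dist y x' < G.dist y y') := fun h => hyn ((inv2 y).mpr h)
    have h2 := diff_one hmed hadj2 y
    have h3 : G.dist y x' ≤ 2 := by
      have t := hmed.1.dist_triangle (u := y) (v := x) (w := x')
      rw [dist_adj hadjxx'] at t
      have e1 : G.dist y x = 1 := by rw [dcomm]; exact dist_adj hadj1
      omega
    have h0 : G.dist y y' ≠ 0 := fun h => hne (dist_zero hmed.1 h)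
    exact SimpleGraph.dist_eq_one_iff_adj.mp (by omega)

lemma final_form (hmed : MedianGraph G) (hab : G.Adj a b) {C : Set (Sym2 V)}
    (hC : C = {f | Theta G s(a, b) f}) :
    ConvexSet G (boundarySet G C (HS G a b)) ∧ ConvexSet G (boundarySet G C (HS G b a)) ∧
    (∀ x ∈ boundarySet G C (HS G a b),
        ∃! y, y ∈ boundarySet G C (HS G b a) ∧ s(x, y) ∈ C) ∧
    (∀ x x' y y' : V, x ∈ boundarySet G C (HS G a b) → x' ∈ boundarySet G C (HS G a b) →
      y ∈ boundarySet G C (HS G b a) → y' ∈ boundarySet G C (HS G b a) →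
      s(x, y) ∈ C → s(x', y') ∈ C → (G.Adj x x' ↔ G.Adj y y')) := by
  have hC' : C = {f | Theta G s(b, a) f} := by rw [hC, Sym2.eq_swap]
  obtain ⟨conv1, match1, dir1⟩ := main_bundle hmed hab hC
  obtain ⟨conv2, _, dir2⟩ := main_bundle hmed hab.symm hC'
  refine ⟨conv1, conv2, match1, ?_⟩
  intro x x' y y' hx hx' hy hy' hxyC hx'y'C
  constructor
  · exact dir1 x x' y y' hx hx' hy hy' hxyC hx'y'C
  · intro h
    refine dir2 y y' x x' hy hy' hx hx' ?_ ?_ h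
    · rw [Sym2.eq_swap]; exact hxyC
    · rw [Sym2.eq_swap]; exact hx'y'C

lemma halfpair_eq (hmed : MedianGraph G) (hab : G.Adj a b) {C : Set (Sym2 V)}
    (hC : C = {f | Theta G s(a, b) f}) {H H' : Set V}
    (hH : IsHalfspacePair G C H H') (haH : a ∈ H) :
    H = HS G a b ∧ H' = HS G b a := by
  obtain ⟨hne, hne', hdisj, hunion, hHc, hH'c, hsep⟩ := hH
  have haW : a ∈ HS G a b := by
    show G.dist a a < G.dist a b
    rw [SimpleGraph.dist_self, dist_adj hab]
    omega
  have hHeq : H = HS G a b := by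
    ext p
    constructor
    · intro hp
      by_contra hpn
      exact reach_diff hmed hab hC haW hpn (hHc a haH p hp)
    · intro hp
      have hr := reach_same hmed hab hC haW hp
      rcases (Set.eq_univ_iff_forall.mp hunion p) with hpH | hpH'
      · exact hpH
      · exact absurd hr (hsep a haH p hpH')
  refine ⟨hHeq, ?_⟩
  ext p
  constructor
  · intro hp
    rw [← not_mem_HS hmed hab, ← hHeq]
    exact fun hpH => Set.disjoint_left.mp hdisj hpH hp
  · intro hp
    have hpn : p ∉ H := by
      rw [hHeq]
      exact (not_mem_HS hmed hab).mpr hp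
    rcases (Set.eq_univ_iff_forall.mp hunion p) with h | h
    · exact absurd h hpn
    · exact h

lemma pair_symm {C : Set (Sym2 V)} {H H' : Set V}
    (hH : IsHalfspacePair G C H H') : IsHalfspacePair G C H' H := by
  obtain ⟨h1, h2, h3, h4, h5, h6, h7⟩ := hH
  exact ⟨h2, h1, h3.symm, by rw [Set.union_comm]; exact h4, h6, h5,
    fun x hx y hy hr => h7 y hy x hx hr.symm⟩

end Aux

/-- In a median graph, for every Θ-class `C` with halfspaces
`H, H'`: both boundaries are convex, each boundary vertex is matched by `C` to a
unique vertex of the opposite boundary, and this matching is an isomorphism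
between the subgraphs induced on the two boundaries. -/
theorem boundaries_convex_and_isomorphic {V : Type*} [Fintype V]
    (G : SimpleGraph V) (hmed : MedianGraph G)
    (C : Set (Sym2 V)) (hC : ThetaClass G C)
    (H H' : Set V) (hH : IsHalfspacePair G C H H') :
    ConvexSet G (boundarySet G C H) ∧ ConvexSet G (boundarySet G C H') ∧
    (∀ x ∈ boundarySet G C H, ∃! y, y ∈ boundarySet G C H' ∧ s(x, y) ∈ C) ∧
    (∀ x x' y y' : V, x ∈ boundarySet G C H → x' ∈ boundarySet G C H →
      y ∈ boundarySet G C H' → y' ∈ boundarySet G C H' →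
      s(x, y) ∈ C → s(x', y') ∈ C → (G.Adj x x' ↔ G.Adj y y')) := by
  obtain ⟨e, he, hCdef⟩ := hC
  revert he hCdef
  induction e using Sym2.ind with
  | _ a b =>
    intro he hCdef
    have hab : G.Adj a b := (SimpleGraph.mem_edgeSet G).mp he
    have hC' : C = {f | Theta G s(b, a) f} := by rw [hCdef, Sym2.eq_swap]
    have hauniv : a ∈ H ∪ H' := by
      rw [hH.2.2.2.1]
      exact Set.mem_univ a
    rcases hauniv with haH | haH'
    · obtain ⟨hHeq, hH'eq⟩ := halfpair_eq hmed hab hCdef hH haH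
      rw [hHeq, hH'eq]
      exact final_form hmed hab hCdef
    · obtain ⟨hH'eq, hHeq⟩ := halfpair_eq hmed hab hCdef (pair_symm hH) haH'
      rw [hHeq, hH'eq]
      exact final_form hmed hab.symm hC'

end MedianPaper
end
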